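/- As β → 0⁺, the density power divergence D_β(p‖q) converges to the Kullback–Leibler divergence KL(p‖q) = ∫ p log(p/q). -/

import Mathlib

open MeasureTheory

section Aux

open Filter Set Real

/-- Right derivative of `β ↦ a ^ β` at `β = 0`. -/
lemma aux_slope_rpow {a : ℝ} (ha : 0 < a) :
    Tendsto (fun β : ℝ => (a ^ β - 1) / β) (nhdsWithin 0 (Set.Ioi 0)) (nhds (Real.log a)) := by
  have h : HasDerivAt (fun x : ℝ => a ^ x) (a ^ (0:ℝ) * Real.log a) 0 :=
    (Real.hasStrictDerivAt_const_rpow ha 0).hasDerivAt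
  have h2 := hasDerivAt_iff_tendsto_slope.mp h
  rw [Real.rpow_zero, one_mul] at h2
  have h3 := h2.mono_left (nhdsWithin_mono _ (fun x hx => ne_of_gt hx))
  refine h3.congr (fun β => ?_)
  simp [slope_def_field, Real.rpow_zero]

lemma aux_meas_rpow {α : Type*} [MeasurableSpace α] {f : α → ℝ} (hf : Measurable f)
    (hpos : ∀ x, 0 < f x) (β : ℝ) : Measurable fun x => f x ^ β := by
  have h : (fun x => f x ^ β) = fun x => Real.exp (Real.log (f x) * β) :=
    funext fun x => Real.rpow_def_of_pos (hpos x) β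
  rw [h]
  exact ((Real.measurable_log.comp hf).mul_const β).exp

lemma aux_integrable {α : Type*} [MeasurableSpace α] (μ : Measure α) [IsFiniteMeasure μ]
    {f : α → ℝ} (hf : Measurable f) {B : ℝ} (hB : ∀ x, |f x| ≤ B) : Integrable f μ :=
  ⟨hf.aestronglyMeasurable,
    HasFiniteIntegral.of_bounded (C := B) (Filter.Eventually.of_forall (by simpa using hB))⟩

/-- Convergence of `∫ f ^ (1+β)` to `∫ f` as `β → 0⁺`. -/
lemma aux_tendsto_int_rpow {α : Type*} [MeasurableSpace α] (μ : Measure α) [IsFiniteMeasure μ]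
    (f : α → ℝ) (hf : Measurable f) (c C : ℝ) (hc : 0 < c) (hfb : ∀ x, f x ∈ Set.Icc c C) :
    Tendsto (fun β : ℝ => ∫ x, f x ^ (1 + β) ∂μ) (nhdsWithin 0 (Set.Ioi 0))
      (nhds (∫ x, f x ∂μ)) := by
  have hpos : ∀ x, 0 < f x := fun x => lt_of_lt_of_le hc (hfb x).1
  have hM1 : (1:ℝ) ≤ max 1 C := le_max_left 1 C
  refine tendsto_integral_filter_of_dominated_convergence (fun _ => (max 1 C) ^ (2:ℝ))
    ?_ ?_ ?_ ?_
  · exact Filter.Eventually.of_forall fun β =>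
      (aux_meas_rpow hf hpos (1 + β)).aestronglyMeasurable
  · filter_upwards [Ioc_mem_nhdsGT (zero_lt_one)] with β hβ
    refine Filter.Eventually.of_forall fun x => ?_
    have h1 : f x ^ (1 + β) ≤ (max 1 C) ^ (1 + β) :=
      Real.rpow_le_rpow (le_of_lt (hpos x)) (le_trans (hfb x).2 (le_max_right 1 C))
        (by linarith [hβ.1.le])
    have h2 : (max 1 C) ^ (1 + β) ≤ (max 1 C) ^ (2:ℝ) :=
      Real.rpow_le_rpow_of_exponent_le hM1 (by linarith [hβ.2])
    have h3 : (0:ℝ) ≤ f x ^ (1 + β) := Real.rpow_nonneg (hpos x).le _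
    rw [Real.norm_eq_abs, abs_of_nonneg h3]
    linarith
  · exact integrable_const _
  · refine Filter.Eventually.of_forall fun x => ?_
    have hcont : ContinuousAt (fun β : ℝ => f x ^ (1 + β)) 0 := by
      have heq : (fun β : ℝ => f x ^ (1 + β)) =
          fun β => Real.exp (Real.log (f x) * (1 + β)) :=
        funext fun β => Real.rpow_def_of_pos (hpos x) (1 + β)
      rw [heq]; fun_prop
    have h : Filter.Tendsto (fun β : ℝ => f x ^ (1 + β)) (nhdsWithin 0 (Set.Ioi 0))
        (nhds (f x ^ (1 + (0:ℝ)))) := hcont.tendsto.mono_left nhdsWithin_le_nhds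
    simpa [Real.rpow_one] using h

end Aux

open Filter Set Real in
/-- As β → 0⁺, the density power divergence converges to the Kullback–Leibler
divergence `∫ p log(p/q)`. -/
theorem dpd_tendsto_kl
    {α : Type*} [MeasurableSpace α] (μ : Measure α) [IsFiniteMeasure μ]
    (p q : α → ℝ) (hpm : Measurable p) (hqm : Measurable q)
    (c C : ℝ) (hc : 0 < c)
    (hpb : ∀ x, p x ∈ Set.Icc c C) (hqb : ∀ x, q x ∈ Set.Icc c C)
    (hp1 : ∫ x, p x ∂μ = 1) (hq1 : ∫ x, q x ∂μ = 1) :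
    Filter.Tendsto
      (fun β : ℝ =>
        (1 / (β * (1 + β))) * (∫ x, p x ^ (1 + β) ∂μ)
        - (1 / β) * (∫ x, p x * q x ^ β ∂μ)
        + (1 / (1 + β)) * (∫ x, q x ^ (1 + β) ∂μ))
      (nhdsWithin 0 (Set.Ioi 0))
      (nhds (∫ x, p x * Real.log (p x / q x) ∂μ)) := by
  have hpp : ∀ x, 0 < p x := fun x => lt_of_lt_of_le hc (hpb x).1
  have hqp : ∀ x, 0 < q x := fun x => lt_of_lt_of_le hc (hqb x).1
  set M : ℝ := max |Real.log c| |Real.log C| with hM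
  have hM0 : 0 ≤ M := le_trans (abs_nonneg _) (le_max_left _ _)
  have hlog_bound : ∀ a : ℝ, a ∈ Set.Icc c C → |Real.log a| ≤ M := by
    intro a ha
    have hc_le : Real.log c ≤ Real.log a := Real.log_le_log hc ha.1
    have hC_le : Real.log a ≤ Real.log C :=
      Real.log_le_log (lt_of_lt_of_le hc ha.1) ha.2
    rw [abs_le]
    constructor
    · have h1 : -|Real.log c| ≤ Real.log c := neg_abs_le _
      have h2 : |Real.log c| ≤ M := le_max_left _ _
      linarith
    · have h1 : Real.log C ≤ |Real.log C| := le_abs_self _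
      have h2 : |Real.log C| ≤ M := le_max_right _ _
      linarith
  -- main limit: (1/β) ∫ p (p^β - q^β) → KL
  have limA : Tendsto (fun β : ℝ => ∫ x, p x * (p x ^ β - q x ^ β) / β ∂μ)
      (nhdsWithin 0 (Set.Ioi 0)) (nhds (∫ x, p x * Real.log (p x / q x) ∂μ)) := by
    set δ : ℝ := min 1 (1 / (2 * M + 1)) with hδ
    have hδ0 : 0 < δ := lt_min zero_lt_one (by positivity)
    refine tendsto_integral_filter_of_dominated_convergence
      (fun _ => C * (4 * M * max 1 C)) ?_ ?_ ?_ ?_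
    · exact Filter.Eventually.of_forall fun β =>
        ((hpm.mul ((aux_meas_rpow hpm hpp β).sub (aux_meas_rpow hqm hqp β))).div_const
          β).aestronglyMeasurable
    · filter_upwards [Ioc_mem_nhdsGT hδ0] with β hβ
      refine Filter.Eventually.of_forall fun x => ?_
      obtain ⟨hβ0, hβδ⟩ := hβ
      have hβ1 : β ≤ 1 := le_trans hβδ (min_le_left _ _)
      have hβM : β * (2 * M) ≤ 1 := by
        have h2 : β ≤ 1 / (2 * M + 1) := le_trans hβδ (min_le_right _ _)
        rw [le_div_iff₀ (by positivity)] at h2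
        nlinarith
      have hla : |Real.log (p x)| ≤ M := hlog_bound _ (hpb x)
      have hlb : |Real.log (q x)| ≤ M := hlog_bound _ (hqb x)
      have h2M : |Real.log (p x) - Real.log (q x)| ≤ 2 * M := by
        have h := abs_add_le (Real.log (p x)) (-(Real.log (q x)))
        rw [abs_neg] at h
        rw [sub_eq_add_neg]
        linarith
      have ht : |β * (Real.log (p x) - Real.log (q x))| ≤ 1 := by
        rw [abs_mul, abs_of_pos hβ0]
        calc β * |Real.log (p x) - Real.log (q x)| ≤ β * (2 * M) :=
              mul_le_mul_of_nonneg_left h2M hβ0.le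
          _ ≤ 1 := hβM
      have hexp : p x ^ β - q x ^ β =
          q x ^ β * (Real.exp (β * (Real.log (p x) - Real.log (q x))) - 1) := by
        rw [Real.rpow_def_of_pos (hpp x), Real.rpow_def_of_pos (hqp x)]
        rw [mul_sub, mul_one, ← Real.exp_add]
        have harg : Real.log (q x) * β + β * (Real.log (p x) - Real.log (q x))
            = Real.log (p x) * β := by ring
        rw [harg]
      have hbβ : q x ^ β ≤ max 1 C := by
        calc q x ^ β ≤ (max 1 C) ^ β :=
              Real.rpow_le_rpow (hqp x).le (le_trans (hqb x).2 (le_max_right 1 C)) hβ0.le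
          _ ≤ (max 1 C) ^ (1:ℝ) :=
              Real.rpow_le_rpow_of_exponent_le (le_max_left 1 C) hβ1
          _ = max 1 C := Real.rpow_one _
      have hexp1 : |Real.exp (β * (Real.log (p x) - Real.log (q x))) - 1|
          ≤ 2 * (β * (2 * M)) := by
        have h1 := Real.abs_exp_sub_one_le ht
        have h2 : |β * (Real.log (p x) - Real.log (q x))| ≤ β * (2 * M) := by
          rw [abs_mul, abs_of_pos hβ0]
          exact mul_le_mul_of_nonneg_left h2M hβ0.le
        linarith
      have hdiff : |p x ^ β - q x ^ β| ≤ β * (4 * M * max 1 C) := by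
        rw [hexp, abs_mul, abs_of_nonneg (Real.rpow_nonneg (hqp x).le β)]
        calc q x ^ β * |Real.exp (β * (Real.log (p x) - Real.log (q x))) - 1|
            ≤ max 1 C * (2 * (β * (2 * M))) :=
              mul_le_mul hbβ hexp1 (abs_nonneg _)
                (le_trans zero_le_one (le_max_left 1 C))
          _ = β * (4 * M * max 1 C) := by ring
      have hC0 : 0 ≤ C := le_trans (hpp x).le (hpb x).2
      rw [Real.norm_eq_abs, abs_div, abs_of_pos hβ0, div_le_iff₀ hβ0, abs_mul,
        abs_of_pos (hpp x)]
      calc p x * |p x ^ β - q x ^ β| ≤ C * |p x ^ β - q x ^ β| :=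
            mul_le_mul_of_nonneg_right (hpb x).2 (abs_nonneg _)
        _ ≤ C * (β * (4 * M * max 1 C)) := mul_le_mul_of_nonneg_left hdiff hC0
        _ = C * (4 * M * max 1 C) * β := by ring
    · exact integrable_const _
    · refine Filter.Eventually.of_forall fun x => ?_
      have ha := aux_slope_rpow (hpp x)
      have hb := aux_slope_rpow (hqp x)
      have h := (ha.sub hb).const_mul (p x)
      rw [← Real.log_div (hpp x).ne' (hqp x).ne'] at h
      refine h.congr' ?_
      filter_upwards [self_mem_nhdsWithin] with β (hβ : β ∈ Set.Ioi 0)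
      have hβ0 : β ≠ 0 := ne_of_gt hβ
      field_simp
      ring
  -- tail limit
  have limP := aux_tendsto_int_rpow μ p hpm c C hc hpb
  have limQ := aux_tendsto_int_rpow μ q hqm c C hc hqb
  rw [hp1] at limP
  rw [hq1] at limQ
  have limTail : Tendsto
      (fun β : ℝ => (1 / (1 + β)) * ((∫ x, q x ^ (1 + β) ∂μ) - ∫ x, p x ^ (1 + β) ∂μ))
      (nhdsWithin 0 (Set.Ioi 0)) (nhds 0) := by
    have h1 : Tendsto (fun β : ℝ => 1 / (1 + β)) (nhdsWithin 0 (Set.Ioi 0)) (nhds 1) := by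
      have hcont : ContinuousAt (fun β : ℝ => 1 / (1 + β)) 0 :=
        ContinuousAt.div continuousAt_const (by fun_prop) (by norm_num)
      simpa using hcont.tendsto.mono_left nhdsWithin_le_nhds
    have h := h1.mul (limQ.sub limP)
    simpa using h
  have main := limA.add limTail
  rw [add_zero] at main
  refine Tendsto.congr' ?_ main
  filter_upwards [self_mem_nhdsWithin] with β (hβ : β ∈ Set.Ioi 0)
  have hβ0 : (β:ℝ) ≠ 0 := ne_of_gt hβ
  have hβpos : (0:ℝ) < β := hβ
  have h1β : (1:ℝ) + β ≠ 0 := by linarith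
  have hmax1 : (0:ℝ) ≤ max 1 C := le_trans zero_le_one (le_max_left 1 C)
  have hbd : ∀ (f : α → ℝ), (∀ x, f x ∈ Set.Icc c C) → (∀ x, 0 < f x) →
      ∀ x, |p x * f x ^ β| ≤ max 1 C * (max 1 C) ^ β := by
    intro f hfb hfp x
    rw [abs_of_nonneg (mul_nonneg (hpp x).le (Real.rpow_nonneg (hfp x).le β))]
    exact mul_le_mul (le_trans (hpb x).2 (le_max_right 1 C))
      (Real.rpow_le_rpow (hfp x).le (le_trans (hfb x).2 (le_max_right 1 C))
        (le_of_lt hβ))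
      (Real.rpow_nonneg (hfp x).le β) hmax1
  have int1 : Integrable (fun x => p x * p x ^ β) μ :=
    aux_integrable μ (hpm.mul (aux_meas_rpow hpm hpp β)) (hbd p hpb hpp)
  have int2 : Integrable (fun x => p x * q x ^ β) μ :=
    aux_integrable μ (hpm.mul (aux_meas_rpow hqm hqp β)) (hbd q hqb hqp)
  have hI1eq : (∫ x, p x ^ (1 + β) ∂μ) = ∫ x, p x * p x ^ β ∂μ := by
    refine integral_congr_ae (Filter.Eventually.of_forall fun x => ?_)
    show p x ^ (1 + β) = p x * p x ^ β
    rw [Real.rpow_add (hpp x), Real.rpow_one]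
  have hsub : (∫ x, p x * (p x ^ β - q x ^ β) / β ∂μ)
      = ((∫ x, p x ^ (1 + β) ∂μ) - ∫ x, p x * q x ^ β ∂μ) / β := by
    have heq : (fun x => p x * (p x ^ β - q x ^ β) / β)
        = fun x => (p x * p x ^ β - p x * q x ^ β) / β := by
      funext x; ring
    rw [heq, integral_div, integral_sub int1 int2, hI1eq]
  rw [hsub]
  field_simp
  ring
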